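/- Let A_n = 1/n − ln((n+1)/n), and let N₁(n), N₀(n) count the ones and zeros in the binary expansion of n. Then for every positive integer k, Σ_{n=2^{k−1}}^{2^k−1} |N₁(n) − N₀(n)| · A_n ≤ Σ_{n=2^{k−1}}^{2^k−1} (N₁(n) + N₀(n)) · A_n < k/2^k. -/

import Mathlib

open Real

/-- Number of ones in the binary expansion of `n`. -/
def N1 (n : ℕ) : ℕ := (Nat.digits 2 n).count 1

/-- Number of zeros in the binary expansion of `n`. -/
def N0 (n : ℕ) : ℕ := (Nat.digits 2 n).count 0

/-- `A n = 1/n - ln((n+1)/n)`. -/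
noncomputable def A (n : ℕ) : ℝ := 1 / (n : ℝ) - Real.log (((n : ℝ) + 1) / (n : ℝ))

lemma count_add_count (l : List ℕ) (h : ∀ x ∈ l, x < 2) :
    l.count 1 + l.count 0 = l.length := by
  induction l with
  | nil => simp
  | cons a t ih =>
    have ha : a < 2 := h a List.mem_cons_self
    have ht := ih (fun x hx => h x (List.mem_cons_of_mem _ hx))
    interval_cases a <;> simp [List.count_cons] <;> omega

lemma N_sum (k n : ℕ) (hk : 1 ≤ k) (h1 : 2 ^ (k - 1) ≤ n) (h2 : n ≤ 2 ^ k - 1) :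
    N1 n + N0 n = k := by
  have hp : 0 < 2 ^ (k - 1) := pow_pos (by norm_num) _
  have hn : n ≠ 0 := by omega
  have hk2 : 0 < 2 ^ k := pow_pos (by norm_num) _
  have hlt : n < 2 ^ ((k - 1) + 1) := by
    have : (k - 1) + 1 = k := by omega
    rw [this]; omega
  have hlog : Nat.log 2 n = k - 1 := Nat.log_eq_of_pow_le_of_lt_pow h1 hlt
  have hlen : (Nat.digits 2 n).length = k := by
    rw [Nat.digits_len 2 n (by norm_num) hn, hlog]; omega
  have hd : ∀ x ∈ Nat.digits 2 n, x < 2 := fun x hx => Nat.digits_lt_base (by norm_num) hx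
  rw [N1, N0, count_add_count _ hd, hlen]

lemma A_nonneg (n : ℕ) (hn : 1 ≤ n) : 0 ≤ A n := by
  have hx : (0 : ℝ) < n := by exact_mod_cast hn
  have hpos : (0 : ℝ) < ((n : ℝ) + 1) / n := by positivity
  have := Real.log_le_sub_one_of_pos hpos
  have h1 : ((n : ℝ) + 1) / n - 1 = 1 / n := by field_simp; ring
  rw [A]; linarith [h1 ▸ this]

lemma A_lt (n : ℕ) (hn : 1 ≤ n) : A n < 1 / (n : ℝ) - 1 / ((n : ℝ) + 1) := by
  have hx : (0 : ℝ) < n := by exact_mod_cast hn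
  have hx1 : (0 : ℝ) < (n : ℝ) + 1 := by linarith
  have hpos : (0 : ℝ) < (n : ℝ) / ((n : ℝ) + 1) := by positivity
  have hne : (n : ℝ) / ((n : ℝ) + 1) ≠ 1 := by
    intro h
    field_simp at h; linarith
  have hlog := Real.log_lt_sub_one_of_pos hpos hne
  have heq : Real.log ((n : ℝ) / ((n : ℝ) + 1)) = - Real.log (((n : ℝ) + 1) / n) := by
    rw [show (n : ℝ) / ((n : ℝ) + 1) = (((n : ℝ) + 1) / n)⁻¹ by rw [inv_div], Real.log_inv]
  have h2 : (n : ℝ) / ((n : ℝ) + 1) - 1 = - (1 / ((n : ℝ) + 1)) := by field_simp; ring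
  rw [heq, h2] at hlog
  rw [A]; linarith

/-- Remainder estimate: `∑ |N₁(n) - N₀(n)| A_n ≤ ∑ (N₁(n) + N₀(n)) A_n < k / 2^k`
where the sums run over `2^{k-1} ≤ n ≤ 2^k - 1`. -/
theorem remainder_estimate (k : ℕ) (hk : 1 ≤ k) :
    (∑ n ∈ Finset.Icc (2 ^ (k - 1)) (2 ^ k - 1), |(N1 n : ℝ) - (N0 n : ℝ)| * A n ≤
      ∑ n ∈ Finset.Icc (2 ^ (k - 1)) (2 ^ k - 1), ((N1 n + N0 n : ℕ) : ℝ) * A n) ∧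
    ∑ n ∈ Finset.Icc (2 ^ (k - 1)) (2 ^ k - 1), ((N1 n + N0 n : ℕ) : ℝ) * A n <
      (k : ℝ) / 2 ^ k := by
  set m : ℕ := 2 ^ (k - 1) with hm
  have hmpos : 0 < m := pow_pos (by norm_num) _
  have h2k : 2 ^ k = 2 * m := by
    rw [hm, ← pow_succ']
    congr 1
    omega
  have hmem : ∀ n ∈ Finset.Icc m (2 ^ k - 1), m ≤ n ∧ n ≤ 2 ^ k - 1 := by
    intro n hn; exact Finset.mem_Icc.mp hn
  constructor
  · apply Finset.sum_le_sum
    intro n hn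
    obtain ⟨h1, h2⟩ := hmem n hn
    have hn1 : 1 ≤ n := le_trans hmpos h1
    have hA := A_nonneg n hn1
    apply mul_le_mul_of_nonneg_right _ hA
    push_cast
    rw [abs_sub_le_iff]
    constructor <;> nlinarith [Nat.cast_nonneg (α := ℝ) (N1 n), Nat.cast_nonneg (α := ℝ) (N0 n)]
  · have hcongr : ∑ n ∈ Finset.Icc m (2 ^ k - 1), ((N1 n + N0 n : ℕ) : ℝ) * A n
        = (k : ℝ) * ∑ n ∈ Finset.Icc m (2 ^ k - 1), A n := by
      rw [Finset.mul_sum]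
      apply Finset.sum_congr rfl
      intro n hn
      obtain ⟨h1, h2⟩ := hmem n hn
      rw [N_sum k n hk h1 h2]
    rw [hcongr]
    have hne : (Finset.Icc m (2 ^ k - 1)).Nonempty := by
      refine ⟨m, Finset.mem_Icc.mpr ⟨le_refl _, ?_⟩⟩
      omega
    have hlt : ∑ n ∈ Finset.Icc m (2 ^ k - 1), A n
        < ∑ n ∈ Finset.Icc m (2 ^ k - 1), (1 / (n : ℝ) - 1 / ((n : ℝ) + 1)) := by
      apply Finset.sum_lt_sum_of_nonempty hne
      intro n hn
      obtain ⟨h1, _⟩ := hmem n hn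
      exact A_lt n (le_trans hmpos h1)
    have htel : ∑ n ∈ Finset.Icc m (2 ^ k - 1), (1 / (n : ℝ) - 1 / ((n : ℝ) + 1))
        = 1 / (m : ℝ) - 1 / ((2 * m : ℕ) : ℝ) := by
      have hicc : Finset.Icc m (2 ^ k - 1) = Finset.Ico m (2 * m) := by
        rw [h2k]
        ext x
        simp [Finset.mem_Icc, Finset.mem_Ico]
        omega
      rw [hicc, Finset.sum_Ico_eq_sum_range]
      have h2m : 2 * m - m = m := by omega
      rw [h2m]
      have : ∀ i : ℕ, 1 / ((m + i : ℕ) : ℝ) - 1 / (((m + i : ℕ) : ℝ) + 1)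
          = (fun j => 1 / ((m + j : ℕ) : ℝ)) i - (fun j => 1 / ((m + j : ℕ) : ℝ)) (i + 1) := by
        intro i
        simp only []
        push_cast
        ring_nf
      rw [Finset.sum_congr rfl (fun i _ => this i), Finset.sum_range_sub']
      have hm0 : (m : ℝ) ≠ 0 := by positivity
      push_cast
      field_simp
      ring
    rw [htel] at hlt
    have hval : 1 / (m : ℝ) - 1 / ((2 * m : ℕ) : ℝ) = 1 / (2 ^ k : ℝ) := by
      have : ((2 * m : ℕ) : ℝ) = 2 * (m : ℝ) := by push_cast; ring
      have hm0 : (m : ℝ) ≠ 0 := by positivity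
      rw [this]
      have h2kr : (2 : ℝ) ^ k = 2 * (m : ℝ) := by
        rw [show ((2:ℝ)) ^ k = ((2 ^ k : ℕ) : ℝ) by push_cast; ring, h2k]
        push_cast; ring
      rw [h2kr]
      field_simp
      ring
    rw [hval] at hlt
    have hk0 : (0 : ℝ) < k := by exact_mod_cast hk
    calc (k : ℝ) * ∑ n ∈ Finset.Icc m (2 ^ k - 1), A n
        < (k : ℝ) * (1 / (2 ^ k : ℝ)) := by
          exact mul_lt_mul_of_pos_left hlt hk0
      _ = (k : ℝ) / 2 ^ k := by ring
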